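/- In the ring R = 𝔽₂[ρ, r₀, r₁, r₂, …]/(rᵢ² − ρ·rᵢ₊₁ : i ∈ ℕ), the image ρ̄ of the variable ρ is a nonzerodivisor; equivalently, multiplication by ρ̄ is an injective map R → R. -/

import Mathlib

open MvPolynomial

noncomputable section

/-- The polynomial ring `𝔽₂[ρ, r₀, r₁, …]`: variable `none` is `ρ`, `some i` is `rᵢ`. -/
abbrev P : Type := MvPolynomial (Option ℕ) (ZMod 2)

/-- The ideal generated by the relations `rᵢ² − ρ·rᵢ₊₁`, `i ∈ ℕ`. -/
def relIdeal : Ideal P :=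
  Ideal.span (Set.range fun i : ℕ => (X (some i) : P) ^ 2 - X none * X (some (i + 1)))

/-- `R = 𝔽₂[ρ, r₀, r₁, …]/(rᵢ² − ρ·rᵢ₊₁ : i ∈ ℕ)`. -/
abbrev R : Type := P ⧸ relIdeal

/-- The image `ρ̄` of `ρ` in `R`. -/
def ρbar : R := Ideal.Quotient.mk relIdeal (X none)

/-- The image `r̄ᵢ` of `rᵢ` in `R`. -/
def rbar (i : ℕ) : R := Ideal.Quotient.mk relIdeal (X (some i))

namespace Aux

abbrev mk : P →+* R := Ideal.Quotient.mk relIdeal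

lemma gen_mem (i : ℕ) : ((X (some i) : P) ^ 2 - X none * X (some (i + 1))) ∈ relIdeal :=
  Ideal.subset_span ⟨i, rfl⟩

/-- core relation lemma -/
lemma L0 (ν : Option ℕ →₀ ℕ) (i : ℕ) :
    mk (monomial (ν + Finsupp.single (some i) 2) (1 : ZMod 2)) =
    mk (monomial (ν + Finsupp.single none 1 + Finsupp.single (some (i + 1)) 1) (1 : ZMod 2)) := by
  rw [Ideal.Quotient.eq]
  have key : (monomial (ν + Finsupp.single (some i) 2) (1 : ZMod 2) : P)
      - monomial (ν + Finsupp.single none 1 + Finsupp.single (some (i + 1)) 1) 1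
      = monomial ν 1 * ((X (some i) : P) ^ 2 - X none * X (some (i + 1))) := by
    rw [mul_sub]
    rw [X_pow_eq_monomial, X, X, monomial_mul, ← mul_assoc, monomial_mul, monomial_mul]
    simp
  rw [key]
  exact Ideal.mul_mem_left _ _ (gen_mem i)

open scoped Classical in
/-- the dividing function on monomials -/
def g (n : Option ℕ →₀ ℕ) : R :=
  if n none ≠ 0 then mk (monomial (n - Finsupp.single none 1) 1)
  else if h : ∃ i, 2 ≤ n (some i) then
    mk (monomial (n - Finsupp.single (some (Nat.find h)) 2
        + Finsupp.single (some (Nat.find h + 1)) 1) 1)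
  else 0

lemma L1 (n : Option ℕ →₀ ℕ) :
    g (Finsupp.single none 1 + n) = mk (monomial n 1) := by
  have h1 : (Finsupp.single none 1 + n : Option ℕ →₀ ℕ) none ≠ 0 := by simp
  rw [g, if_pos h1, add_tsub_cancel_left]

lemma L2 (n : Option ℕ →₀ ℕ) (i : ℕ) :
    g (n + Finsupp.single (some i) 2) = mk (monomial (n + Finsupp.single (some (i + 1)) 1) 1) := by
  by_cases h1 : n none = 0
  · have hm : (n + Finsupp.single (some i) 2 : Option ℕ →₀ ℕ) none = 0 := by simp [h1]
    have hex : ∃ k, 2 ≤ (n + Finsupp.single (some i) 2 : Option ℕ →₀ ℕ) (some k) := ⟨i, by simp⟩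
    rw [g, if_neg (by simpa using hm), dif_pos hex]
    have hj : 2 ≤ (n + Finsupp.single (some i) 2 : Option ℕ →₀ ℕ) (some (Nat.find hex)) :=
      Nat.find_spec hex
    generalize hJ : Nat.find hex = j at hj ⊢
    have key : ∀ (A B : Option ℕ →₀ ℕ), A = B →
        mk (monomial A (1 : ZMod 2)) = mk (monomial B 1) := fun A B h => by rw [h]
    by_cases hji : j = i
    · subst hji
      rw [add_tsub_cancel_right]
    · have hnj : 2 ≤ n (some j) := by
        have hij : ¬ (i = j) := fun h => hji h.symm
        simp only [Finsupp.add_apply, Finsupp.single_apply] at hj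
        rw [if_neg (by simpa using hij)] at hj
        omega
      have hle : Finsupp.single (some j) 2 ≤ n := by
        rwa [Finsupp.single_le_iff]
      set κ := n - Finsupp.single (some j) 2 with hκdef
      have hn : n = κ + Finsupp.single (some j) 2 := by
        rw [hκdef, tsub_add_cancel_of_le hle]
      have hsub : n + Finsupp.single (some i) 2 - Finsupp.single (some j) 2
          = κ + Finsupp.single (some i) 2 := by
        rw [hn]; rw [add_right_comm, add_tsub_cancel_right]
      rw [hsub]
      have e1 := L0 (κ + Finsupp.single (some (j + 1)) 1) i
      have e2 := L0 (κ + Finsupp.single (some (i + 1)) 1) j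
      rw [hn]
      calc mk (monomial (κ + Finsupp.single (some i) 2 + Finsupp.single (some (j + 1)) 1) 1)
          = mk (monomial (κ + Finsupp.single (some (j+1)) 1 + Finsupp.single (some i) 2) 1) :=
            key _ _ (by abel)
        _ = mk (monomial (κ + Finsupp.single (some (j+1)) 1 + Finsupp.single none 1
              + Finsupp.single (some (i+1)) 1) 1) := e1
        _ = mk (monomial (κ + Finsupp.single (some (i+1)) 1 + Finsupp.single none 1
              + Finsupp.single (some (j+1)) 1) 1) := key _ _ (by abel)
        _ = mk (monomial (κ + Finsupp.single (some (i+1)) 1 + Finsupp.single (some j) 2) 1) :=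
            e2.symm
        _ = mk (monomial (κ + Finsupp.single (some j) 2 + Finsupp.single (some (i+1)) 1) 1) :=
            key _ _ (by abel)
  · have hm : ¬ ((n + Finsupp.single (some i) 2 : Option ℕ →₀ ℕ) none = 0) := by simp [h1]
    rw [g, if_pos (by simpa using hm)]
    have hle : Finsupp.single none 1 ≤ n := by
      rw [Finsupp.single_le_iff]; omega
    have hsub : n + Finsupp.single (some i) 2 - Finsupp.single none 1
        = (n - Finsupp.single none 1) + Finsupp.single (some i) 2 := by
      rw [tsub_add_eq_add_tsub hle]
    rw [hsub, L0, tsub_add_cancel_of_le hle]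

/-- the linear "division by ρ" map -/
def ψ : P →ₗ[ZMod 2] R :=
  (Finsupp.linearCombination (ZMod 2) g).comp (AddMonoidAlgebra.coeffLinearEquiv (ZMod 2)).toLinearMap

lemma ψ_monomial (n : Option ℕ →₀ ℕ) (c : ZMod 2) : ψ (monomial n c) = c • g n := by
  rw [← single_eq_monomial]
  simp [ψ, AddMonoidAlgebra.coeffLinearEquiv, Finsupp.linearCombination_single]

lemma mk_monomial_smul (n : Option ℕ →₀ ℕ) (c : ZMod 2) :
    c • mk (monomial n 1) = mk (monomial n c) := by
  have h : (mk (monomial n c) : R) = mk (c • monomial n 1) := by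
    rw [smul_monomial, smul_eq_mul, mul_one]
  rw [h, ← Ideal.Quotient.mkₐ_eq_mk (ZMod 2), map_smul]

lemma ψ_X_none_mul (p : P) : ψ (X none * p) = mk p := by
  induction p using MvPolynomial.induction_on' with
  | monomial n c =>
    have hexp : (X none : P) * monomial n c = monomial (Finsupp.single none 1 + n) c := by
      rw [X, monomial_mul, one_mul]
    rw [hexp, ψ_monomial, L1, mk_monomial_smul]
  | add p q hp hq =>
    rw [mul_add, map_add, hp, hq, map_add]

lemma ψ_mul_gen (p : P) (i : ℕ) :
    ψ (p * ((X (some i) : P) ^ 2 - X none * X (some (i + 1)))) = 0 := by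
  induction p using MvPolynomial.induction_on' with
  | monomial n c =>
    rw [mul_sub, map_sub]
    have h1 : (monomial n c : P) * X (some i) ^ 2 = monomial (n + Finsupp.single (some i) 2) c := by
      rw [X_pow_eq_monomial, monomial_mul, mul_one]
    have h2 : (monomial n c : P) * (X none * X (some (i + 1)))
        = X none * monomial (n + Finsupp.single (some (i + 1)) 1) c := by
      rw [X, X, ← mul_assoc, monomial_mul, monomial_mul, monomial_mul]
      simp only [mul_one, one_mul]
      congr 1
      abel
    rw [h1, h2, ψ_monomial, L2, mk_monomial_smul, ψ_X_none_mul, sub_self]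
  | add p q hp hq =>
    rw [add_mul, map_add, hp, hq, add_zero]

lemma ψ_vanish {f : P} (hf : f ∈ relIdeal) : ψ f = 0 := by
  rw [relIdeal] at hf
  rw [Finsupp.mem_ideal_span_range_iff_exists_finsupp] at hf
  obtain ⟨c, hc⟩ := hf
  rw [← hc, map_finsuppSum]
  exact Finset.sum_eq_zero fun i _ => ψ_mul_gen (c i) i

lemma rho_inj : Function.Injective (fun x : R => ρbar * x) := by
  have key : ∀ x : R, ρbar * x = 0 → x = 0 := by
    intro x hx
    obtain ⟨p, rfl⟩ := Ideal.Quotient.mk_surjective x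
    have hmem : (X none : P) * p ∈ relIdeal := by
      rw [← Ideal.Quotient.eq_zero_iff_mem]
      exact hx
    have := ψ_vanish hmem
    rw [ψ_X_none_mul] at this
    exact this
  intro x y hxy
  have : ρbar * (x - y) = 0 := by
    simp only at hxy
    rw [mul_sub, hxy, sub_self]
  have h0 := key _ this
  exact sub_eq_zero.mp h0

end Aux

/-- `ρ̄` is a nonzerodivisor in `R`: multiplication by `ρ̄` is injective. -/
theorem stmt3 : ρbar ∈ nonZeroDivisors R ∧ Function.Injective (fun x : R => ρbar * x) := by
  refine ⟨?_, Aux.rho_inj⟩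
  rw [mem_nonZeroDivisors_iff_right]
  intro x hx
  have : ρbar * x = 0 := by rw [mul_comm]; exact hx
  have h := Aux.rho_inj (a₁ := x) (a₂ := 0)
    (show ρbar * x = ρbar * 0 by rw [mul_zero]; exact this)
  exact h
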